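/- For a distribution with finite right endpoint η and CDF of the form F(x) = Φ(x)/Φ(η) on (-∞, η): with a_n = η - F^{-1}(1-1/n), one has n(1 - F(η + a_n x)) → -x for every x ≤ 0, and hence [F(η + a_n x)]^n → e^{x} for x ≤ 0. -/

import Mathlib

open MeasureTheory ProbabilityTheory Filter Real Topology ENNReal

noncomputable def Phi (x : ℝ) : ℝ := ((gaussianReal 0 1) (Set.Iic x)).toReal

noncomputable def stdphi (x : ℝ) : ℝ := gaussianPDFReal 0 1 x

noncomputable def PhiInv (p : ℝ) : ℝ := Function.invFun Phi p

noncomputable def truncQuantile (η p : ℝ) : ℝ := PhiInv (p * Phi η)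

lemma stdphi_pos (x : ℝ) : 0 < stdphi x := gaussianPDFReal_pos 0 1 x one_ne_zero

lemma stdphi_continuous : Continuous stdphi := by
  unfold stdphi
  rw [gaussianPDFReal_def]
  fun_prop

lemma stdphi_integrable : Integrable stdphi := integrable_gaussianPDFReal 0 1

lemma Phi_eq_integral (x : ℝ) : Phi x = ∫ t in Set.Iic x, stdphi t := by
  unfold Phi stdphi
  rw [gaussianReal_apply_eq_integral 0 one_ne_zero, ENNReal.toReal_ofReal]
  exact integral_nonneg fun t => gaussianPDFReal_nonneg _ _ _

lemma Phi_sub (a b : ℝ) : Phi b - Phi a = ∫ t in a..b, stdphi t := by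
  rw [Phi_eq_integral, Phi_eq_integral,
    intervalIntegral.integral_Iic_sub_Iic stdphi_integrable.integrableOn
      stdphi_integrable.integrableOn]

lemma hasDerivAt_Phi (y : ℝ) : HasDerivAt Phi (stdphi y) y := by
  have h : HasDerivAt (fun u => ∫ t in (0:ℝ)..u, stdphi t) (stdphi y) y :=
    intervalIntegral.integral_hasDerivAt_right
      (stdphi_integrable.intervalIntegrable)
      (stdphi_continuous.stronglyMeasurable.stronglyMeasurableAtFilter)
      stdphi_continuous.continuousAt
  have : Phi = fun u => Phi 0 + ∫ t in (0:ℝ)..u, stdphi t := by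
    funext u
    have := Phi_sub 0 u
    linarith
  rw [this]
  exact h.const_add (Phi 0)

lemma Phi_strictMono : StrictMono Phi := by
  intro a b hab
  have h := intervalIntegral.intervalIntegral_pos_of_pos (stdphi_integrable.intervalIntegrable) stdphi_pos hab
  have := Phi_sub a b
  linarith

lemma Phi_nonneg (x : ℝ) : 0 ≤ Phi x := ENNReal.toReal_nonneg

lemma Phi_le_one (x : ℝ) : Phi x ≤ 1 := by
  unfold Phi
  have h1 : (gaussianReal 0 1) (Set.Iic x) ≤ 1 := by
    conv_rhs => rw [← measure_univ (μ := gaussianReal 0 1)]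
    exact measure_mono (Set.subset_univ _)
  calc ((gaussianReal 0 1) (Set.Iic x)).toReal ≤ (1 : ℝ≥0∞).toReal :=
        ENNReal.toReal_mono (by simp) h1
    _ = 1 := by simp

lemma Phi_pos (x : ℝ) : 0 < Phi x := lt_of_le_of_lt (Phi_nonneg (x - 1)) (Phi_strictMono (by linarith))

lemma Phi_lt_one (x : ℝ) : Phi x < 1 := lt_of_lt_of_le (Phi_strictMono (show x < x + 1 by linarith)) (Phi_le_one (x + 1))

lemma Phi_tendsto_atTop : Tendsto Phi atTop (𝓝 1) := by
  have h := tendsto_measure_Iic_atTop (gaussianReal 0 1)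
  rw [measure_univ] at h
  have := (ENNReal.tendsto_toReal (by simp : (1 : ℝ≥0∞) ≠ ⊤)).comp h
  exact this

lemma exists_Phi_lt {p : ℝ} (hp : 0 < p) : ∃ a : ℝ, Phi a < p := by
  have hempty : (⋂ n : ℕ, Set.Iic (-(n:ℝ))) = ∅ := by
    ext y
    simp only [Set.mem_iInter, Set.mem_Iic, Set.mem_empty_iff_false, iff_false, not_forall, not_le]
    obtain ⟨n, hn⟩ := exists_nat_gt (-y)
    exact ⟨n, by linarith⟩
  have h : Tendsto (fun n : ℕ => (gaussianReal 0 1) (Set.Iic (-(n:ℝ)))) atTop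
      (𝓝 ((gaussianReal 0 1) (⋂ n : ℕ, Set.Iic (-(n:ℝ))))) := by
    apply tendsto_measure_iInter_atTop
    · exact fun n => measurableSet_Iic.nullMeasurableSet
    · intro m n hmn
      exact Set.Iic_subset_Iic.2 (by exact_mod_cast neg_le_neg (by exact_mod_cast hmn))
    · exact ⟨0, measure_ne_top _ _⟩
  rw [hempty] at h
  simp only [measure_empty] at h
  have h2 : Tendsto (fun n : ℕ => Phi (-(n:ℝ))) atTop (𝓝 0) := by
    have := (ENNReal.tendsto_toReal (by simp : (0 : ℝ≥0∞) ≠ ⊤)).comp h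
    exact this
  have := (h2.eventually (eventually_lt_nhds hp)).exists
  obtain ⟨n, hn⟩ := this
  exact ⟨-(n:ℝ), hn⟩

lemma Phi_surj {p : ℝ} (h0 : 0 < p) (h1 : p < 1) : ∃ x, Phi x = p := by
  obtain ⟨a, ha⟩ := exists_Phi_lt h0
  obtain ⟨b, hb⟩ := (Phi_tendsto_atTop.eventually (eventually_gt_nhds h1)).exists
  have hab : a ≤ b := le_of_lt (Phi_strictMono.lt_iff_lt.1 (by linarith))
  have hc : ContinuousOn Phi (Set.Icc a b) :=
    fun y _ => ((hasDerivAt_Phi y).continuousAt).continuousWithinAt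
  have := intermediate_value_Icc hab hc
  obtain ⟨x, _, hxe⟩ := this ⟨le_of_lt ha, le_of_lt hb⟩
  exact ⟨x, hxe⟩


lemma alg_key (c P s t n : ℝ) (hs : s ≠ 0) (ht : t ≠ 0) (hn : n ≠ 0) (hc : c ≠ 0) :
    (P - c) / (-(s * t)) * t / (((1 - 1 / n) * c - c) / (-s)) = n * (1 - P / c) := by
  have e : ((1 - 1 / n) * c - c) = -(c / n) := by field_simp; ring
  have hd : (-(c / n) / (-s)) ≠ 0 := by
    apply div_ne_zero
    · simpa using div_ne_zero hc hn
    · simpa using hs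
  rw [e, div_eq_iff hd]
  field_simp
  ring

lemma Phi_PhiInv {p : ℝ} (h0 : 0 < p) (h1 : p < 1) : Phi (PhiInv p) = p :=
  Function.invFun_eq (Phi_surj h0 h1)

/-- For the truncated normal CDF F(x) = Φ(x)/Φ(η) for x < η (and 1 for x ≥ η),
with a_n = η - F⁻¹(1-1/n), one has n(1 - F(η + a_n x)) → -x for every x ≤ 0,
and hence [F(η + a_n x)]^n → e^x for x ≤ 0. -/
theorem stmt19 (η : ℝ) (x : ℝ) (hx : x ≤ 0) :
    Filter.Tendsto (fun n : ℕ =>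
      n * (1 - (if η + (η - truncQuantile η (1 - 1 / n)) * x < η
        then Phi (η + (η - truncQuantile η (1 - 1 / n)) * x) / Phi η else 1)))
      Filter.atTop (nhds (-x)) ∧
    Filter.Tendsto (fun n : ℕ =>
      (if η + (η - truncQuantile η (1 - 1 / n)) * x < η
        then Phi (η + (η - truncQuantile η (1 - 1 / n)) * x) / Phi η else 1) ^ n)
      Filter.atTop (nhds (Real.exp x)) := by
  rcases eq_or_lt_of_le hx with rfl | hxlt
  · constructor
    · simp only [mul_zero, add_zero, lt_self_iff_false, if_false, sub_self, mul_zero, neg_zero]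
      exact tendsto_const_nhds
    · simp only [mul_zero, add_zero, lt_self_iff_false, if_false, one_pow, Real.exp_zero]
      exact tendsto_const_nhds
  -- now x < 0
  set t : ℝ := -x with ht
  have htpos : 0 < t := by simp [ht]; linarith
  set a : ℕ → ℝ := fun n => η - truncQuantile η (1 - 1 / n) with ha
  have hPhiη := Phi_pos η
  have hPhiη1 := Phi_lt_one η
  -- For n ≥ 2 : Phi (η - a n) = (1 - 1/n) * Phi η and 0 < a n
  have hkey : ∀ n : ℕ, 2 ≤ n → Phi (η - a n) = (1 - 1 / n) * Phi η := by
    intro n hn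
    have hn' : (2 : ℝ) ≤ n := by exact_mod_cast hn
    have h1n : 1 / (n : ℝ) ≤ 1 / 2 := by
      apply one_div_le_one_div_of_le <;> linarith
    have h1n' : 0 < 1 / (n : ℝ) := by positivity
    have hp0 : 0 < (1 - 1 / (n : ℝ)) * Phi η := by nlinarith
    have hp1 : (1 - 1 / (n : ℝ)) * Phi η < 1 := by nlinarith
    have : η - a n = truncQuantile η (1 - 1 / n) := by simp [ha]
    rw [this]
    exact Phi_PhiInv hp0 hp1
  have hapos : ∀ n : ℕ, 2 ≤ n → 0 < a n := by
    intro n hn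
    have hn' : (2 : ℝ) ≤ n := by exact_mod_cast hn
    have h1n' : 0 < 1 / (n : ℝ) := by positivity
    have h := hkey n hn
    have hlt : Phi (η - a n) < Phi η := by nlinarith
    have := Phi_strictMono.lt_iff_lt.1 hlt
    linarith
  have halim : Tendsto a atTop (𝓝 0) := by
    rw [tendsto_order]
    constructor
    · intro b hb
      filter_upwards [eventually_ge_atTop 2] with n hn
      exact lt_trans hb (hapos n hn)
    · intro ε hε
      have hPlt : Phi (η - ε) < Phi η := Phi_strictMono (by linarith)
      have hconv : Tendsto (fun n : ℕ => (1 - 1 / (n : ℝ)) * Phi η) atTop (𝓝 (Phi η)) := by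
        have := (tendsto_const_nhds (x := (1:ℝ)) (f := atTop)).sub
          tendsto_one_div_atTop_nhds_zero_nat
        simpa using this.mul_const (Phi η)
      filter_upwards [eventually_ge_atTop 2, hconv.eventually (eventually_gt_nhds hPlt)]
        with n hn hgt
      have := hkey n hn
      have : Phi (η - ε) < Phi (η - a n) := by rw [this]; exact hgt
      have := Phi_strictMono.lt_iff_lt.1 this
      linarith
  have hslope : Tendsto (slope Phi η) (𝓝[≠] η) (𝓝 (stdphi η)) :=
    hasDerivAt_iff_tendsto_slope.mp (hasDerivAt_Phi η)
  -- z n := η - a n * t and w n := η - a n tend to η within ≠ η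
  have hz : Tendsto (fun n => η - a n * t) atTop (𝓝[≠] η) := by
    rw [tendsto_nhdsWithin_iff]
    constructor
    · have : Tendsto (fun n => η - a n * t) atTop (𝓝 (η - 0 * t)) :=
        tendsto_const_nhds.sub (halim.mul_const t)
      simpa using this
    · filter_upwards [eventually_ge_atTop 2] with n hn
      have := hapos n hn
      have : 0 < a n * t := mul_pos this htpos
      simp only [Set.mem_compl_iff, Set.mem_singleton_iff]
      intro h
      rw [sub_eq_self] at h
      · linarith
  have hw : Tendsto (fun n => η - a n) atTop (𝓝[≠] η) := by
    rw [tendsto_nhdsWithin_iff]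
    constructor
    · have : Tendsto (fun n => η - a n) atTop (𝓝 (η - 0)) := tendsto_const_nhds.sub halim
      simpa using this
    · filter_upwards [eventually_ge_atTop 2] with n hn
      have := hapos n hn
      simp only [Set.mem_compl_iff, Set.mem_singleton_iff]
      intro h
      rw [sub_eq_self] at h
      linarith
  have hS : Tendsto (fun n => slope Phi η (η - a n * t)) atTop (𝓝 (stdphi η)) :=
    hslope.comp hz
  have hS1 : Tendsto (fun n => slope Phi η (η - a n)) atTop (𝓝 (stdphi η)) :=
    hslope.comp hw
  have hφ := stdphi_pos η
  have hL : Tendsto (fun n => slope Phi η (η - a n * t) * t / slope Phi η (η - a n))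
      atTop (𝓝 t) := by
    have h := (hS.mul_const t).div hS1 hφ.ne'
    have h' : stdphi η * t / stdphi η = t := by
      rw [mul_comm]; exact mul_div_cancel_right₀ t hφ.ne'
    rw [h'] at h
    exact h
  -- eventual equality with the target expression for part 1
  have heq : ∀ᶠ n : ℕ in atTop,
      slope Phi η (η - a n * t) * t / slope Phi η (η - a n)
        = (n : ℝ) * (1 - (if η + (η - truncQuantile η (1 - 1 / n)) * x < η
            then Phi (η + (η - truncQuantile η (1 - 1 / n)) * x) / Phi η else 1)) := by
    filter_upwards [eventually_ge_atTop 2] with n hn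
    have hapos' := hapos n hn
    have hn0 : (n : ℝ) ≠ 0 := by positivity
    have hcond : η + (η - truncQuantile η (1 - 1 / n)) * x < η := by
      have : a n * x < 0 := mul_neg_of_pos_of_neg hapos' hxlt
      simp only [ha] at this ⊢
      linarith
    rw [if_pos hcond]
    have hxe : η + (η - truncQuantile η (1 - 1 / n)) * x = η - a n * t := by
      simp only [ha, ht]; ring
    rw [hxe]
    have e1 : (η - a n * t) - η = -(a n * t) := by ring
    have e2 : (η - a n) - η = -(a n) := by ring
    rw [slope_def_field, slope_def_field, e1, e2, hkey n hn]
    exact alg_key (Phi η) (Phi (η - a n * t)) (a n) t n hapos'.ne' htpos.ne' hn0 hPhiη.ne'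
  constructor
  · have := hL.congr' heq
    simpa [ht] using this
  · -- second part
    set F : ℕ → ℝ := fun n => (if η + (η - truncQuantile η (1 - 1 / n)) * x < η
        then Phi (η + (η - truncQuantile η (1 - 1 / n)) * x) / Phi η else 1) with hF
    have h1 : Tendsto (fun n : ℕ => (n : ℝ) * (1 - F n)) atTop (𝓝 (-x)) := by
      have := hL.congr' heq
      simpa [ht, hF] using this
    have h2 : Tendsto (fun n : ℕ => 1 - F n) atTop (𝓝 0) := by
      have hm : Tendsto (fun n : ℕ => ((n : ℝ) * (1 - F n)) * (1 / n)) atTop (𝓝 ((-x) * 0)) :=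
        h1.mul tendsto_one_div_atTop_nhds_zero_nat
      rw [mul_zero] at hm
      apply hm.congr'
      filter_upwards [eventually_ge_atTop 1] with n hn
      have hn0 : (n : ℝ) ≠ 0 := by positivity
      field_simp
    have hF1 : Tendsto F atTop (𝓝 1) := by
      have := tendsto_const_nhds (x := (1:ℝ)) (f := (atTop : Filter ℕ)) |>.sub h2
      simpa using this
    have hFlt : ∀ᶠ n : ℕ in atTop, F n < 1 := by
      filter_upwards [eventually_ge_atTop 2] with n hn
      have hapos' := hapos n hn
      have hcond : η + (η - truncQuantile η (1 - 1 / n)) * x < η := by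
        have : a n * x < 0 := mul_neg_of_pos_of_neg hapos' hxlt
        simp only [ha] at this ⊢
        linarith
      simp only [hF, if_pos hcond]
      rw [div_lt_one hPhiη]
      exact Phi_strictMono hcond
    have hFpos : ∀ᶠ n : ℕ in atTop, 0 < F n := by
      filter_upwards with n
      simp only [hF]
      split
      · exact div_pos (Phi_pos _) hPhiη
      · norm_num
    -- F n → 1 within ≠ 1
    have hF1' : Tendsto F atTop (𝓝[≠] (1:ℝ)) := by
      rw [tendsto_nhdsWithin_iff]
      exact ⟨hF1, by filter_upwards [hFlt] with n hn; simp [ne_of_lt hn]⟩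
    have hlogslope : Tendsto (fun n => slope Real.log 1 (F n)) atTop (𝓝 1) := by
      have hd : HasDerivAt Real.log 1 1 := by
        simpa using Real.hasDerivAt_log one_ne_zero
      exact (hasDerivAt_iff_tendsto_slope.mp hd).comp hF1'
    have hlog : Tendsto (fun n : ℕ => (n : ℝ) * Real.log (F n)) atTop (𝓝 x) := by
      have hm : Tendsto (fun n : ℕ => slope Real.log 1 (F n) * (-((n:ℝ) * (1 - F n))))
          atTop (𝓝 (1 * (-(-x)))) := hlogslope.mul h1.neg
      rw [one_mul, neg_neg] at hm
      apply hm.congr'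
      filter_upwards [hFlt] with n hn
      rw [slope_def_field, Real.log_one]
      have h1F : F n - 1 ≠ 0 := by intro h; apply absurd hn; simp; linarith [sub_eq_zero.mp h]
      field_simp
      ring
    have := (Real.continuous_exp.tendsto x).comp hlog
    apply this.congr'
    filter_upwards [hFpos] with n hn
    simp only [Function.comp]
    rw [Real.exp_nat_mul, Real.exp_log hn]
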